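/- (Step of Lemma 3: the reduced adjoint symmetry of Lax-pair solutions.) Fix a positive integer N. Let D = diag(d₁, d₂) be a 2N×2N block-diagonal complex matrix (d₁, d₂ ∈ M_N(ℂ)) with D† = D and D² = I_{2N}. Let Q, P, 𝓕 : ℤ × ℝ → M_N(ℂ) take diagonal-matrix values, set F(n,t) = diag(𝓕(n,t), 𝓕(n,t)) and U(n,t) = [[0, Q(n,t)],[P(n,t), 0]], and assume the reduction relations U(n,t) = −D U(n,t)† D and F(n,t) = D F(n,t)† D hold for all n, t. Let V(n,t,z) = i ( U(n−1,t) Z − U(n,t) Z^{−1} − (1/2)(U(n,t)U(n−1,t) + U(n−1,t)U(n,t)) ) Σ₃. Suppose μ : ℤ × ℝ × (ℂ∖{0}) → M_{2N}(ℂ) is differentiable in t and satisfies F(n,t) μ(n+1,t,z) = Z μ(n,t,z) Z^{−1} + U(n,t) μ(n,t,z) Z^{−1} and ∂_t μ(n,t,z) = i ω(z)(Σ₃ μ − μ Σ₃) + V(n,t,z) μ(n,t,z) for all n, t and all z ≠ 0. Then Φ(n,t,z) := D μ(n,t, 1/conj(z))† D satisfies Φ(n+1,t,z) F(n,t) = Z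 Φ(n,t,z) Z^{−1} − Z Φ(n,t,z) U(n,t) and ∂_t Φ(n,t,z) = i ω(z)(Σ₃ Φ − Φ Σ₃) − Φ(n,t,z) V(n,t,z), for all n, t and z ≠ 0. -/

import Mathlib

noncomputable section

open Matrix

variable {N : ℕ}

/-- `Z = diag(z I_N, z⁻¹ I_N)`. -/
def Zb (N : ℕ) (z : ℂ) : Matrix (Fin N ⊕ Fin N) (Fin N ⊕ Fin N) ℂ :=
  Matrix.fromBlocks (z • 1) 0 0 (z⁻¹ • 1)

/-- `Σ₃ = diag(I_N, −I_N)`. -/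
def Sigma3b (N : ℕ) : Matrix (Fin N ⊕ Fin N) (Fin N ⊕ Fin N) ℂ :=
  Matrix.fromBlocks 1 0 0 (-1)

/-- `ω(z) = (1/2)(z − z⁻¹)²`. -/
def omega (z : ℂ) : ℂ := (1 / 2 : ℂ) * (z - z⁻¹) ^ 2

/-- `F(n,t) = diag(𝓕(n,t), 𝓕(n,t))`. -/
def Fblk (Fd : ℤ → ℝ → Matrix (Fin N) (Fin N) ℂ) (n : ℤ) (t : ℝ) :
    Matrix (Fin N ⊕ Fin N) (Fin N ⊕ Fin N) ℂ :=
  Matrix.fromBlocks (Fd n t) 0 0 (Fd n t)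

/-- `U(n,t) = [[0, Q(n,t)],[P(n,t), 0]]`. -/
def Ublk (Q P : ℤ → ℝ → Matrix (Fin N) (Fin N) ℂ) (n : ℤ) (t : ℝ) :
    Matrix (Fin N ⊕ Fin N) (Fin N ⊕ Fin N) ℂ :=
  Matrix.fromBlocks 0 (Q n t) (P n t) 0

/-- `V(n,t,z) = i (U(n−1,t)Z − U(n,t)Z⁻¹ − (1/2)(U(n,t)U(n−1,t) + U(n−1,t)U(n,t))) Σ₃`. -/
def Vblk (Q P : ℤ → ℝ → Matrix (Fin N) (Fin N) ℂ) (n : ℤ) (t : ℝ) (z : ℂ) :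
    Matrix (Fin N ⊕ Fin N) (Fin N ⊕ Fin N) ℂ :=
  Complex.I • ((Ublk Q P (n - 1) t * Zb N z - Ublk Q P n t * (Zb N z)⁻¹
    - (1 / 2 : ℂ) • (Ublk Q P n t * Ublk Q P (n - 1) t
      + Ublk Q P (n - 1) t * Ublk Q P n t)) * Sigma3b N)

lemma Zb_conjT (z : ℂ) : (Zb N z)ᴴ = Zb N (starRingEnd ℂ z) := by
  simp [Zb, Matrix.fromBlocks_conjTranspose, map_inv₀]

lemma Zb_mul_Zb (z : ℂ) (hz : z ≠ 0) : Zb N z * Zb N z⁻¹ = 1 := by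
  simp [Zb, Matrix.fromBlocks_multiply, Matrix.smul_mul, Matrix.mul_smul, smul_smul,
    mul_inv_cancel₀ hz, inv_inv, inv_mul_cancel₀ hz, ← Matrix.fromBlocks_one]

lemma Zb_inv (z : ℂ) (hz : z ≠ 0) : (Zb N z)⁻¹ = Zb N z⁻¹ :=
  Matrix.inv_eq_right_inv (Zb_mul_Zb z hz)

lemma S_conjT : (Sigma3b N)ᴴ = Sigma3b N := by
  simp [Sigma3b, Matrix.fromBlocks_conjTranspose]

lemma Zb_comm_D (d₁ d₂ : Matrix (Fin N) (Fin N) ℂ) (z : ℂ) :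
    Matrix.fromBlocks d₁ 0 0 d₂ * Zb N z = Zb N z * Matrix.fromBlocks d₁ 0 0 d₂ := by
  simp [Zb, Matrix.fromBlocks_multiply, Matrix.mul_smul, Matrix.smul_mul]

lemma S_comm_D (d₁ d₂ : Matrix (Fin N) (Fin N) ℂ) :
    Matrix.fromBlocks d₁ 0 0 d₂ * Sigma3b N = Sigma3b N * Matrix.fromBlocks d₁ 0 0 d₂ := by
  simp [Sigma3b, Matrix.fromBlocks_multiply]

lemma Zb_mul_U (Q P : ℤ → ℝ → Matrix (Fin N) (Fin N) ℂ) (m : ℤ) (t : ℝ) (z : ℂ) :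
    Zb N z * Ublk Q P m t = Ublk Q P m t * Zb N z⁻¹ := by
  simp [Zb, Ublk, Matrix.fromBlocks_multiply, Matrix.mul_smul, Matrix.smul_mul, inv_inv]

lemma S_mul_U (Q P : ℤ → ℝ → Matrix (Fin N) (Fin N) ℂ) (m : ℤ) (t : ℝ) :
    Sigma3b N * Ublk Q P m t = -(Ublk Q P m t * Sigma3b N) := by
  simp [Sigma3b, Ublk, Matrix.fromBlocks_multiply, Matrix.fromBlocks_neg]

lemma S_comm_Zb (z : ℂ) : Sigma3b N * Zb N z = Zb N z * Sigma3b N := by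
  simp [Sigma3b, Zb, Matrix.fromBlocks_multiply, Matrix.mul_smul, Matrix.smul_mul]

lemma omega_conj (z : ℂ) : starRingEnd ℂ (omega ((starRingEnd ℂ z)⁻¹)) = omega z := by
  simp only [omega, _root_.map_mul, map_pow, map_sub, map_inv₀, _root_.map_one, map_ofNat, map_div₀,
    Complex.conj_conj, inv_inv]
  ring

lemma hasDerivAt_conj_sandwich {n : Type*} [Fintype n] (L R : Matrix n n ℂ)
    (A : ℝ → Matrix n n ℂ) (A' : Matrix n n ℂ) (t : ℝ)
    (h : ∀ i j, HasDerivAt (fun s => A s i j) (A' i j) t) (i j : n) :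
    HasDerivAt (fun s => (L * (A s)ᴴ * R) i j) ((L * A'ᴴ * R) i j) t := by
  simp only [Matrix.mul_apply, Matrix.conjTranspose_apply]
  exact HasDerivAt.fun_sum fun l _ =>
    (HasDerivAt.fun_sum fun k _ => ((h l k).star.const_mul _)).mul_const _

/-- Step of Lemma 3: under the reduction `U = −D U† D`, `F = D F† D` (with `D`
block-diagonal, Hermitian and an involution), the function
`Φ(n,t,z) = D μ(n,t,1/conj z)† D` solves the adjoint Lax equations. -/
theorem stmt16 (N : ℕ) (hN : 0 < N)
    (d₁ d₂ : Matrix (Fin N) (Fin N) ℂ)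
    (D : Matrix (Fin N ⊕ Fin N) (Fin N ⊕ Fin N) ℂ)
    (hD : D = Matrix.fromBlocks d₁ 0 0 d₂)
    (hDH : Dᴴ = D) (hD2 : D * D = 1)
    (Q P Fd : ℤ → ℝ → Matrix (Fin N) (Fin N) ℂ)
    (hQ : ∀ n t, (Q n t).IsDiag) (hP : ∀ n t, (P n t).IsDiag)
    (hFd : ∀ n t, (Fd n t).IsDiag)
    (hUred : ∀ n t, Ublk Q P n t = -(D * (Ublk Q P n t)ᴴ * D))
    (hFred : ∀ n t, Fblk Fd n t = D * (Fblk Fd n t)ᴴ * D)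
    (μ : ℤ → ℝ → ℂ → Matrix (Fin N ⊕ Fin N) (Fin N ⊕ Fin N) ℂ)
    (hS : ∀ (n : ℤ) (t : ℝ) (z : ℂ), z ≠ 0 →
      Fblk Fd n t * μ (n + 1) t z =
        Zb N z * μ n t z * (Zb N z)⁻¹ + Ublk Q P n t * μ n t z * (Zb N z)⁻¹)
    (hT : ∀ (n : ℤ) (z : ℂ), z ≠ 0 → ∀ (t : ℝ) (i j : Fin N ⊕ Fin N),
      HasDerivAt (fun s => μ n s z i j)
        (((Complex.I * omega z) • (Sigma3b N * μ n t z - μ n t z * Sigma3b N)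
          + Vblk Q P n t z * μ n t z) i j) t)
    (Φ : ℤ → ℝ → ℂ → Matrix (Fin N ⊕ Fin N) (Fin N ⊕ Fin N) ℂ)
    (hΦ : ∀ n t z, Φ n t z = D * (μ n t ((starRingEnd ℂ z)⁻¹))ᴴ * D) :
    ∀ (n : ℤ) (t : ℝ) (z : ℂ), z ≠ 0 →
      (Φ (n + 1) t z * Fblk Fd n t =
        Zb N z * Φ n t z * (Zb N z)⁻¹ - Zb N z * Φ n t z * Ublk Q P n t) ∧
      (∀ i j : Fin N ⊕ Fin N,
        HasDerivAt (fun s => Φ n s z i j)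
          (((Complex.I * omega z) • (Sigma3b N * Φ n t z - Φ n t z * Sigma3b N)
            - Φ n t z * Vblk Q P n t z) i j) t) := by
  intro n t z hz
  have hz' : (starRingEnd ℂ) z ≠ 0 := by simpa using hz
  set w : ℂ := ((starRingEnd ℂ) z)⁻¹ with hw_def
  have hw : w ≠ 0 := inv_ne_zero hz'
  have hcw : (starRingEnd ℂ) w = z⁻¹ := by simp [hw_def]
  have hwi : w⁻¹ = (starRingEnd ℂ) z := by simp [hw_def]
  have sand : ∀ A B : Matrix (Fin N ⊕ Fin N) (Fin N ⊕ Fin N) ℂ,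
      (D * A * D) * (D * B * D) = D * (A * B) * D := by
    intro A B
    simp only [mul_assoc]
    rw [← mul_assoc D D (B * D), hD2, one_mul]
  have hDcommZ : ∀ u : ℂ, D * Zb N u = Zb N u * D := fun u => by
    rw [hD]; exact Zb_comm_D d₁ d₂ u
  have hDcommS : D * Sigma3b N = Sigma3b N * D := by
    rw [hD]; exact S_comm_D d₁ d₂
  have hDZ : ∀ u : ℂ, D * Zb N u * D = Zb N u := fun u => by
    rw [hDcommZ, mul_assoc, hD2, mul_one]
  have hDS : D * Sigma3b N * D = Sigma3b N := by
    rw [hDcommS, mul_assoc, hD2, mul_one]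
  have hDU : ∀ m : ℤ, D * (Ublk Q P m t)ᴴ * D = -(Ublk Q P m t) := fun m =>
    neg_eq_iff_eq_neg.mp (hUred m t).symm
  have hZzi : (Zb N z)⁻¹ = Zb N z⁻¹ := Zb_inv z hz
  have hZwi : (Zb N w)⁻¹ = Zb N ((starRingEnd ℂ) z) := by rw [Zb_inv w hw, hwi]
  have hZwH : (Zb N w)ᴴ = Zb N z⁻¹ := by rw [Zb_conjT, hcw]
  have hZwiH : ((Zb N w)⁻¹)ᴴ = Zb N z := by
    rw [hZwi, Zb_conjT]; simp
  constructor
  · have h1 := hS n t w hw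
    have h2 := congrArg Matrix.conjTranspose h1
    simp only [Matrix.conjTranspose_mul, Matrix.conjTranspose_add] at h2
    rw [hZwH, hZwiH] at h2
    have e1 : D * (Zb N z * ((μ n t w)ᴴ * Zb N z⁻¹)) * D
        = Zb N z * (D * (μ n t w)ᴴ * D) * Zb N z⁻¹ := by
      rw [← sand, ← sand, hDZ, hDZ, ← mul_assoc]
    have e2 : D * (Zb N z * ((μ n t w)ᴴ * (Ublk Q P n t)ᴴ)) * D
        = -(Zb N z * (D * (μ n t w)ᴴ * D) * Ublk Q P n t) := by
      rw [← sand, ← sand, hDZ, hDU, mul_neg, mul_neg, ← mul_assoc]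
    rw [hΦ, hΦ, ← hw_def, hZzi]
    calc D * (μ (n + 1) t w)ᴴ * D * Fblk Fd n t
        = (D * (μ (n + 1) t w)ᴴ * D) * (D * (Fblk Fd n t)ᴴ * D) := by rw [← hFred n t]
      _ = D * ((μ (n + 1) t w)ᴴ * (Fblk Fd n t)ᴴ) * D := sand _ _
      _ = Zb N z * (D * (μ n t w)ᴴ * D) * Zb N z⁻¹
          - Zb N z * (D * (μ n t w)ᴴ * D) * Ublk Q P n t := by
        rw [h2, Matrix.mul_add, Matrix.add_mul, e1, e2, ← sub_eq_add_neg]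
  · have c1 : ∀ (m : ℤ) (X : Matrix (Fin N ⊕ Fin N) (Fin N ⊕ Fin N) ℂ),
        Sigma3b N * (Ublk Q P m t * X) = -(Ublk Q P m t * (Sigma3b N * X)) := by
      intro m X
      rw [← mul_assoc, S_mul_U, neg_mul, mul_assoc]
    have c2 : ∀ (u : ℂ) (X : Matrix (Fin N ⊕ Fin N) (Fin N ⊕ Fin N) ℂ),
        Sigma3b N * (Zb N u * X) = Zb N u * (Sigma3b N * X) := by
      intro u X
      rw [← mul_assoc, S_comm_Zb, mul_assoc]
    have c3 : ∀ (m : ℤ) (u : ℂ) (X : Matrix (Fin N ⊕ Fin N) (Fin N ⊕ Fin N) ℂ),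
        Zb N u * (Ublk Q P m t * X) = Ublk Q P m t * (Zb N u⁻¹ * X) := by
      intro m u X
      rw [← mul_assoc, Zb_mul_U, mul_assoc]
    have hVred : D * (Vblk Q P n t w)ᴴ * D = -(Vblk Q P n t z) := by
      simp only [Vblk, hZzi, Zb_inv w hw, hwi]
      simp only [Matrix.conjTranspose_smul, Matrix.conjTranspose_mul, Matrix.conjTranspose_sub,
        Matrix.conjTranspose_add, S_conjT, Zb_conjT, Complex.star_def, Complex.conj_I,
        map_div₀, _root_.map_one, map_ofNat, Complex.conj_conj, hcw]
      simp only [Matrix.mul_smul, Matrix.smul_mul, Matrix.mul_sub, Matrix.sub_mul,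
        Matrix.mul_add, Matrix.add_mul, ← sand, hDS, hDZ, hDU, mul_neg, neg_mul, neg_neg,
        neg_smul, smul_neg]
      simp only [mul_assoc, c1, c2, c3, S_mul_U, S_comm_Zb, Zb_mul_U, inv_inv,
        mul_neg, neg_neg, Matrix.mul_smul, smul_add, smul_sub, smul_neg]
      module
    have hstar : star (Complex.I * omega w) = -(Complex.I * omega z) := by
      rw [hw_def, star_mul', Complex.star_def, Complex.conj_I, omega_conj, neg_mul]
    have hmat : D * ((Complex.I * omega w) • (Sigma3b N * μ n t w - μ n t w * Sigma3b N)
          + Vblk Q P n t w * μ n t w)ᴴ * D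
        = (Complex.I * omega z) • (Sigma3b N * (D * (μ n t w)ᴴ * D)
            - (D * (μ n t w)ᴴ * D) * Sigma3b N)
          - (D * (μ n t w)ᴴ * D) * Vblk Q P n t z := by
      have s1 : D * ((μ n t w)ᴴ * Sigma3b N) * D = (D * (μ n t w)ᴴ * D) * Sigma3b N := by
        rw [← sand, hDS]
      have s2 : D * (Sigma3b N * (μ n t w)ᴴ) * D = Sigma3b N * (D * (μ n t w)ᴴ * D) := by
        rw [← sand, hDS]
      have s3 : D * ((μ n t w)ᴴ * (Vblk Q P n t w)ᴴ) * D
          = (D * (μ n t w)ᴴ * D) * -(Vblk Q P n t z) := by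
        rw [← sand, hVred]
      simp only [Matrix.conjTranspose_add, Matrix.conjTranspose_smul, Matrix.conjTranspose_sub,
        Matrix.conjTranspose_mul, S_conjT, hstar]
      rw [Matrix.mul_add, Matrix.add_mul, Matrix.mul_smul, Matrix.smul_mul,
        Matrix.mul_sub, Matrix.sub_mul, s1, s2, s3,
        neg_smul, ← smul_neg, neg_sub, mul_neg, ← sub_eq_add_neg]
    intro i j
    have hfun : (fun s => Φ n s z i j) = fun s => (D * (μ n s w)ᴴ * D) i j := by
      funext s; rw [hΦ, ← hw_def]
    rw [hfun, hΦ n t z, ← hw_def, ← hmat]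
    exact hasDerivAt_conj_sandwich D D (fun s => μ n s w) _ t (hT n w hw t) i j

end
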